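/- For a reversible (symmetric) Markov chain on a finite configuration space that decomposes into connected components C, with uniform initial distribution, the Cesàro limit of the connected autocorrelation of the local observable m_v equals Σ_C (|C|/D)(m̄_v(C) − m̄_v)², where D is the total number of configurations, m̄_v(C) is the mean of m_v over C, and m̄_v is the global mean. In particular this limit is nonnegative and is bounded below by the contribution of any subfamily of components. -/

import Mathlib

open scoped Classical
open Filter

section CesaroAux

variable {S : Type*} [Fintype S]

/-- The transition matrix as a continuous linear map on Euclidean space. -/
noncomputable def cesaroCLM (T : Matrix S S ℝ) :
    EuclideanSpace ℝ S →L[ℝ] EuclideanSpace ℝ S :=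
  LinearMap.toContinuousLinearMap
    { toFun := fun x => WithLp.toLp 2 (T.mulVec x)
      map_add' := fun x y => by rw [WithLp.ofLp_add, T.mulVec_add]; rfl
      map_smul' := fun c x => by rw [WithLp.ofLp_smul, T.mulVec_smul]; rfl }

@[simp] lemma cesaroCLM_apply (T : Matrix S S ℝ) (x : EuclideanSpace ℝ S) :
    cesaroCLM T x = T.mulVec x := rfl

lemma cesaroCLM_iterate (T : Matrix S S ℝ) (t : ℕ) (x : EuclideanSpace ℝ S) :
    (⇑(cesaroCLM T))^[t] x = (T ^ t).mulVec x := by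
  induction t with
  | zero => simp [Matrix.one_mulVec]
  | succ t ih =>
      rw [Function.iterate_succ_apply', cesaroCLM_apply, ih]
      show T.mulVec ((T ^ t).mulVec x) = _
      rw [Matrix.mulVec_mulVec, ← pow_succ']

lemma cesaroCLM_norm_le (T : Matrix S S ℝ)
    (hsymm : ∀ a b, T a b = T b a) (hnonneg : ∀ a b, 0 ≤ T a b)
    (hstoch : ∀ a, ∑ b, T a b = 1) : ‖cesaroCLM T‖ ≤ 1 := by
  refine ContinuousLinearMap.opNorm_le_bound _ zero_le_one fun x => ?_
  rw [one_mul]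
  have hx : ∀ y : EuclideanSpace ℝ S, ‖y‖ = Real.sqrt (∑ a, (y a) ^ 2) := by
    intro y
    rw [EuclideanSpace.norm_eq]
    congr 1
    exact Finset.sum_congr rfl fun a _ => by rw [Real.norm_eq_abs, sq_abs]
  rw [hx, hx]
  apply Real.sqrt_le_sqrt
  have step1 : ∀ a, ((cesaroCLM T x) a) ^ 2 ≤ ∑ b, T a b * (x b) ^ 2 := by
    intro a
    have happ : (cesaroCLM T x) a = ∑ b, T a b * x b := by
      simp [Matrix.mulVec, dotProduct]
    rw [happ]
    have key := Finset.sum_mul_sq_le_sq_mul_sq Finset.univ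
      (fun b => Real.sqrt (T a b)) (fun b => Real.sqrt (T a b) * x b)
    have h1 : ∀ b, Real.sqrt (T a b) * (Real.sqrt (T a b) * x b) = T a b * x b := by
      intro b
      rw [← mul_assoc, Real.mul_self_sqrt (hnonneg a b)]
    have h2 : ∀ b, (Real.sqrt (T a b)) ^ 2 = T a b := fun b => Real.sq_sqrt (hnonneg a b)
    have h3 : ∀ b, (Real.sqrt (T a b) * x b) ^ 2 = T a b * (x b) ^ 2 := by
      intro b
      rw [mul_pow, h2]
    simp only [h1, h2, h3] at key
    calc (∑ b, T a b * x b) ^ 2 ≤ (∑ b, T a b) * ∑ b, T a b * (x b) ^ 2 := key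
      _ = ∑ b, T a b * (x b) ^ 2 := by rw [hstoch, one_mul]
  calc ∑ a, ((cesaroCLM T x) a) ^ 2 ≤ ∑ a, ∑ b, T a b * (x b) ^ 2 :=
        Finset.sum_le_sum fun a _ => step1 a
    _ = ∑ b, ∑ a, T a b * (x b) ^ 2 := Finset.sum_comm
    _ = ∑ b, (x b) ^ 2 := by
        refine Finset.sum_congr rfl fun b _ => ?_
        rw [← Finset.sum_mul]
        have : ∑ a, T a b = 1 := by
          calc ∑ a, T a b = ∑ a, T b a := Finset.sum_congr rfl fun a _ => hsymm a b
            _ = 1 := hstoch b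
        rw [this, one_mul]

lemma harmonic_const (T : Matrix S S ℝ)
    (hsymm : ∀ a b, T a b = T b a) (hnonneg : ∀ a b, 0 ≤ T a b)
    (hstoch : ∀ a, ∑ b, T a b = 1)
    (y : S → ℝ) (hy : T.mulVec y = y) :
    ∀ a b, Relation.EqvGen (fun a b => T a b ≠ 0) a b → y a = y b := by
  have hmul : ∀ a, ∑ b, T a b * y b = y a := by
    intro a
    have := congrFun hy a
    simpa [Matrix.mulVec, dotProduct] using this
  have key : ∀ a b, T a b ≠ 0 → y a = y b := by
    have h1 : ∑ a, ∑ b, T a b * (y a) ^ 2 = ∑ a, (y a) ^ 2 := by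
      refine Finset.sum_congr rfl fun a _ => ?_
      rw [← Finset.sum_mul, hstoch, one_mul]
    have h2 : ∑ a, ∑ b, T a b * y a * y b = ∑ a, (y a) ^ 2 := by
      refine Finset.sum_congr rfl fun a _ => ?_
      have e1 : ∑ b, T a b * y a * y b = y a * ∑ b, T a b * y b := by
        rw [Finset.mul_sum]
        exact Finset.sum_congr rfl fun b _ => by ring
      rw [e1, hmul]
      ring
    have h3 : ∑ a, ∑ b, T a b * (y b) ^ 2 = ∑ a, (y a) ^ 2 := by
      rw [Finset.sum_comm]
      refine Finset.sum_congr rfl fun b _ => ?_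
      rw [← Finset.sum_mul]
      have : ∑ a, T a b = 1 := by
        calc ∑ a, T a b = ∑ a, T b a := Finset.sum_congr rfl fun a _ => hsymm a b
          _ = 1 := hstoch b
      rw [this, one_mul]
    have hzero : ∑ a, ∑ b, T a b * (y a - y b) ^ 2 = 0 := by
      calc ∑ a, ∑ b, T a b * (y a - y b) ^ 2
          = ∑ a, ∑ b, (T a b * (y a) ^ 2 - 2 * (T a b * y a * y b) + T a b * (y b) ^ 2) :=
            Finset.sum_congr rfl fun a _ => Finset.sum_congr rfl fun b _ => by ring
        _ = ∑ a, ((∑ b, T a b * (y a) ^ 2) - 2 * (∑ b, T a b * y a * y b)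
              + ∑ b, T a b * (y b) ^ 2) := by
            refine Finset.sum_congr rfl fun a _ => ?_
            rw [Finset.sum_add_distrib, Finset.sum_sub_distrib, ← Finset.mul_sum]
        _ = (∑ a, ∑ b, T a b * (y a) ^ 2) - 2 * (∑ a, ∑ b, T a b * y a * y b)
              + ∑ a, ∑ b, T a b * (y b) ^ 2 := by
            rw [Finset.sum_add_distrib, Finset.sum_sub_distrib, ← Finset.mul_sum]
        _ = 0 := by rw [h1, h2, h3]; ring
    intro a b hab
    have hnn : ∀ a ∈ Finset.univ (α := S), 0 ≤ ∑ b, T a b * (y a - y b) ^ 2 :=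
      fun a _ => Finset.sum_nonneg fun b _ => mul_nonneg (hnonneg a b) (sq_nonneg _)
    have hrow : ∑ b', T a b' * (y a - y b') ^ 2 = 0 :=
      (Finset.sum_eq_zero_iff_of_nonneg hnn).mp hzero a (Finset.mem_univ a)
    have hterm : T a b * (y a - y b) ^ 2 = 0 :=
      (Finset.sum_eq_zero_iff_of_nonneg
        (fun b' _ => mul_nonneg (hnonneg a b') (sq_nonneg _))).mp hrow b (Finset.mem_univ b)
    rcases mul_eq_zero.mp hterm with h | h
    · exact absurd h hab
    · have := pow_eq_zero_iff (n := 2) (by norm_num) |>.mp h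
      linarith [sub_eq_zero.mp this]
  intro a b hab
  induction hab with
  | rel a b h => exact key a b h
  | refl a => rfl
  | symm a b _ ih => exact ih.symm
  | trans a b c _ _ ih1 ih2 => exact ih1.trans ih2

end CesaroAux

/-- For a reversible (symmetric, nonnegative, stochastic) Markov chain on a
finite configuration space, with uniform initial distribution, the Cesàro limit of the
connected autocorrelation of an observable `f` equals
`Σ_C (|C|/D) (mean_C f − mean f)²`, where the sum runs over the connected components `C` of
the chain (equivalence classes of the transition relation). In particular the limit is
nonnegative and is bounded below by the contribution of any subfamily of components. -/
theorem cesaro_autocorrelation (S : Type*) [Fintype S] [Nonempty S]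
    (T : Matrix S S ℝ)
    (hsymm : ∀ a b, T a b = T b a)
    (hnonneg : ∀ a b, 0 ≤ T a b)
    (hstoch : ∀ a, ∑ b, T a b = 1)
    (f : S → ℝ) :
    ∀ (st : Setoid S), st = Relation.EqvGen.setoid (fun a b => T a b ≠ 0) →
    ∀ (cls : Quotient st → Finset S),
      (∀ c, cls c = Finset.univ.filter (fun a => (⟦a⟧ : Quotient st) = c)) →
    ∀ (D : ℝ), D = (Fintype.card S : ℝ) →
    ∀ (mbar : S → ℝ) (meanC : Quotient st → ℝ),
      (∀ a, mbar a = (1 / D) * ∑ b, f b) →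
      (∀ c, meanC c = (∑ a ∈ cls c, f a) / ((cls c).card : ℝ)) →
    ∀ (L : ℝ), L = ∑ c : Quotient st, (((cls c).card : ℝ) / D) *
        (meanC c - (1 / D) * ∑ b, f b) ^ 2 →
      (Filter.Tendsto (fun τ : ℕ => (1 / (τ : ℝ)) * ∑ t ∈ Finset.range τ,
          ((1 / D) * ∑ m₀, f m₀ * ∑ m, (T ^ t) m m₀ * f m -
            ((1 / D) * ∑ m₀, f m₀) ^ 2)) Filter.atTop (nhds L)) ∧
      0 ≤ L ∧
      ∀ F : Finset (Quotient st),
        ∑ c ∈ F, (((cls c).card : ℝ) / D) * (meanC c - (1 / D) * ∑ b, f b) ^ 2 ≤ L := by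
  intro st hst cls hcls D hD mbar meanC hmbar hmeanC L hL
  have hD0 : (0 : ℝ) < D := by
    rw [hD]; exact_mod_cast Fintype.card_pos
  have hDne : D ≠ 0 := ne_of_gt hD0
  set μ : ℝ := (1 / D) * ∑ b, f b with hμ
  set p : S → ℝ := fun a => meanC (Quotient.mk st a) with hp
  set h : S → ℝ := fun a => f a - p a with hh
  -- basic facts about classes
  have hmemiff : ∀ (a : S) (c : Quotient st), a ∈ cls c ↔ Quotient.mk st a = c := by
    intro a c; rw [hcls]; simp
  have hmem : ∀ a : S, a ∈ cls (Quotient.mk st a) := fun a => (hmemiff a _).mpr rfl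
  have hcard : ∀ c : Quotient st, 0 < ((cls c).card : ℝ) := by
    intro c
    obtain ⟨a, ha⟩ := Quotient.exists_rep c
    have : a ∈ cls c := (hmemiff a c).mpr ha
    exact_mod_cast Finset.card_pos.mpr ⟨a, this⟩
  have hsumcls : ∀ g : S → ℝ, ∑ c : Quotient st, ∑ a ∈ cls c, g a = ∑ a, g a := by
    intro g
    have := Finset.sum_fiberwise Finset.univ (fun a => Quotient.mk st a) g
    calc ∑ c : Quotient st, ∑ a ∈ cls c, g a
        = ∑ c : Quotient st, ∑ a ∈ Finset.univ.filter (fun a => Quotient.mk st a = c), g a := by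
          refine Finset.sum_congr rfl fun c _ => ?_
          rw [hcls]
      _ = ∑ a, g a := this
  have hfsum : ∀ c, ∑ a ∈ cls c, f a = ((cls c).card : ℝ) * meanC c := by
    intro c
    rw [hmeanC c]
    rw [mul_div_cancel₀ _ (ne_of_gt (hcard c))]
  have hpconst : ∀ c, ∀ a ∈ cls c, p a = meanC c := by
    intro c a ha
    rw [hp]
    simp only
    rw [(hmemiff a c).mp ha]
  have hhsum : ∀ c, ∑ a ∈ cls c, h a = 0 := by
    intro c
    have : ∑ a ∈ cls c, h a = (∑ a ∈ cls c, f a) - ∑ a ∈ cls c, p a := by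
      rw [← Finset.sum_sub_distrib]
    rw [this, hfsum c]
    have : ∑ a ∈ cls c, p a = ((cls c).card : ℝ) * meanC c := by
      calc ∑ a ∈ cls c, p a = ∑ _a ∈ cls c, meanC c :=
            Finset.sum_congr rfl fun a ha => hpconst c a ha
        _ = ((cls c).card : ℝ) * meanC c := by
            rw [Finset.sum_const, nsmul_eq_mul]
    rw [this]; ring
  -- relation facts
  have hrel : ∀ a b : S, T a b ≠ 0 → Quotient.mk st a = Quotient.mk st b := by
    intro a b hab
    apply Quotient.sound
    show st.r a b
    rw [hst]
    exact Relation.EqvGen.rel a b hab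
  have hTp : T.mulVec p = p := by
    funext a
    show ∑ b, T a b * p b = p a
    calc ∑ b, T a b * p b = ∑ b, T a b * p a := by
          refine Finset.sum_congr rfl fun b _ => ?_
          by_cases hb : T a b = 0
          · rw [hb]; ring
          · rw [hp]; simp only; rw [hrel a b hb]
      _ = p a := by rw [← Finset.sum_mul, hstoch, one_mul]
  have hTtp : ∀ t : ℕ, (T ^ t).mulVec p = p := by
    intro t
    induction t with
    | zero => simp [Matrix.one_mulVec]
    | succ t ih =>
        rw [pow_succ', ← Matrix.mulVec_mulVec, ih, hTp]
  have hsymmpow : ∀ (t : ℕ) (a b : S), (T ^ t) a b = (T ^ t) b a := by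
    intro t a b
    have hT : T.transpose = T := by ext a b; exact hsymm b a
    have : (T ^ t).transpose = T ^ t := by rw [Matrix.transpose_pow, hT]
    conv_lhs => rw [← this]
    rfl
  have hph : ∑ a, p a * h a = 0 := by
    rw [← hsumcls (fun a => p a * h a)]
    refine Finset.sum_eq_zero fun c _ => ?_
    calc ∑ a ∈ cls c, p a * h a = ∑ a ∈ cls c, meanC c * h a :=
          Finset.sum_congr rfl fun a ha => by rw [hpconst c a ha]
      _ = meanC c * ∑ a ∈ cls c, h a := by rw [Finset.mul_sum]
      _ = 0 := by rw [hhsum c, mul_zero]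
  -- global sums
  have hsum_card : ∑ c : Quotient st, ((cls c).card : ℝ) = D := by
    rw [hD]
    have := hsumcls (fun _ => (1 : ℝ))
    simpa [Finset.card_univ] using this
  have hsum_cm : ∑ c : Quotient st, ((cls c).card : ℝ) * meanC c = ∑ b, f b := by
    calc ∑ c : Quotient st, ((cls c).card : ℝ) * meanC c
        = ∑ c : Quotient st, ∑ a ∈ cls c, f a :=
          Finset.sum_congr rfl fun c _ => (hfsum c).symm
      _ = ∑ b, f b := hsumcls f
  have hsum_pp : ∑ a, p a * p a = ∑ c : Quotient st, ((cls c).card : ℝ) * meanC c ^ 2 := by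
    rw [← hsumcls (fun a => p a * p a)]
    refine Finset.sum_congr rfl fun c _ => ?_
    calc ∑ a ∈ cls c, p a * p a = ∑ _a ∈ cls c, meanC c * meanC c :=
          Finset.sum_congr rfl fun a ha => by rw [hpconst c a ha]
      _ = ((cls c).card : ℝ) * meanC c ^ 2 := by
          rw [Finset.sum_const, nsmul_eq_mul]; ring
  have hfD : ∑ b, f b = D * μ := by rw [hμ]; field_simp
  have hPL : L = (1 / D) * (∑ a, p a * p a) - μ ^ 2 := by
    rw [hL, hsum_pp]
    have expand : ∀ c : Quotient st,
        (((cls c).card : ℝ) / D) * (meanC c - μ) ^ 2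
        = (1 / D) * (((cls c).card : ℝ) * meanC c ^ 2)
          - (2 * μ / D) * (((cls c).card : ℝ) * meanC c)
          + (μ ^ 2 / D) * ((cls c).card : ℝ) := fun c => by ring
    simp_rw [expand]
    rw [Finset.sum_add_distrib, Finset.sum_sub_distrib, ← Finset.mul_sum, ← Finset.mul_sum,
      ← Finset.mul_sum, hsum_cm, hsum_card, hfD]
    field_simp
    ring
  -- pointwise identity in t
  have hfph : ∀ a, f a = p a + h a := fun a => by rw [hh]; ring
  have hident : ∀ t : ℕ,
      (1 / D) * (∑ m₀, f m₀ * ∑ m, (T ^ t) m m₀ * f m) - μ ^ 2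
      = L + (1 / D) * (∑ m₀, h m₀ * ∑ m, (T ^ t) m m₀ * h m) := by
    intro t
    have hw : ∀ m₀, ∑ m, (T ^ t) m m₀ * p m = p m₀ := by
      intro m₀
      calc ∑ m, (T ^ t) m m₀ * p m = ∑ m, (T ^ t) m₀ m * p m :=
            Finset.sum_congr rfl fun m _ => by rw [hsymmpow t m m₀]
        _ = (T ^ t).mulVec p m₀ := by simp [Matrix.mulVec, dotProduct]
        _ = p m₀ := by rw [hTtp t]
    have hw' : ∀ m, ∑ m₀, (T ^ t) m m₀ * p m₀ = p m := by
      intro m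
      calc ∑ m₀, (T ^ t) m m₀ * p m₀ = (T ^ t).mulVec p m := by
            simp [Matrix.mulVec, dotProduct]
        _ = p m := by rw [hTtp t]
    have hpw : ∑ m₀, p m₀ * ∑ m, (T ^ t) m m₀ * h m = 0 := by
      calc ∑ m₀, p m₀ * ∑ m, (T ^ t) m m₀ * h m
          = ∑ m₀, ∑ m, p m₀ * ((T ^ t) m m₀ * h m) := by
            refine Finset.sum_congr rfl fun m₀ _ => ?_
            rw [Finset.mul_sum]
        _ = ∑ m, ∑ m₀, p m₀ * ((T ^ t) m m₀ * h m) := Finset.sum_comm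
        _ = ∑ m, (∑ m₀, (T ^ t) m m₀ * p m₀) * h m := by
            refine Finset.sum_congr rfl fun m _ => ?_
            rw [Finset.sum_mul]
            exact Finset.sum_congr rfl fun m₀ _ => by ring
        _ = ∑ m, p m * h m := by
            refine Finset.sum_congr rfl fun m _ => ?_
            rw [hw' m]
        _ = 0 := hph
    have hhp : ∑ m₀, h m₀ * p m₀ = 0 := by
      rw [← hph]
      exact Finset.sum_congr rfl fun a _ => mul_comm _ _
    have hB : ∑ m₀, f m₀ * ∑ m, (T ^ t) m m₀ * f m
        = (∑ a, p a * p a) + ∑ m₀, h m₀ * ∑ m, (T ^ t) m m₀ * h m := by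
      have step1 : ∀ m₀, ∑ m, (T ^ t) m m₀ * f m = p m₀ + ∑ m, (T ^ t) m m₀ * h m := by
        intro m₀
        calc ∑ m, (T ^ t) m m₀ * f m
            = ∑ m, ((T ^ t) m m₀ * p m + (T ^ t) m m₀ * h m) := by
              refine Finset.sum_congr rfl fun m _ => ?_
              rw [hfph m]; ring
          _ = (∑ m, (T ^ t) m m₀ * p m) + ∑ m, (T ^ t) m m₀ * h m :=
              Finset.sum_add_distrib
          _ = p m₀ + ∑ m, (T ^ t) m m₀ * h m := by rw [hw m₀]
      calc ∑ m₀, f m₀ * ∑ m, (T ^ t) m m₀ * f m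
          = ∑ m₀, ((p m₀ + h m₀) * (p m₀ + ∑ m, (T ^ t) m m₀ * h m)) := by
            refine Finset.sum_congr rfl fun m₀ _ => ?_
            rw [step1 m₀, ← hfph m₀]
        _ = ∑ m₀, (p m₀ * p m₀ + h m₀ * p m₀ + p m₀ * (∑ m, (T ^ t) m m₀ * h m)
              + h m₀ * (∑ m, (T ^ t) m m₀ * h m)) :=
            Finset.sum_congr rfl fun m₀ _ => by ring
        _ = (∑ a, p a * p a) + (∑ m₀, h m₀ * p m₀)
              + (∑ m₀, p m₀ * ∑ m, (T ^ t) m m₀ * h m)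
              + ∑ m₀, h m₀ * ∑ m, (T ^ t) m m₀ * h m := by
            rw [Finset.sum_add_distrib, Finset.sum_add_distrib, Finset.sum_add_distrib]
        _ = _ := by rw [hhp, hpw]; ring
    rw [hB, hPL]
    ring
  -- the Euclidean-space setup
  have hAnorm : ‖cesaroCLM T‖ ≤ 1 := cesaroCLM_norm_le T hsymm hnonneg hstoch
  let hE : EuclideanSpace ℝ S := WithLp.toLp 2 h
  have herg : Tendsto (fun τ => birkhoffAverage ℝ (⇑(cesaroCLM T)) _root_.id τ hE)
      atTop (nhds 0) := by
    have h0 := (cesaroCLM T).tendsto_birkhoffAverage_orthogonalProjection hAnorm hE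
    suffices hz : (((cesaroCLM T).eqLocus (1 : EuclideanSpace ℝ S →L[ℝ] EuclideanSpace ℝ S)).orthogonalProjectionOnto hE : EuclideanSpace ℝ S) = 0 by
      rw [hz] at h0; exact h0
    rw [ZeroMemClass.coe_eq_zero, Submodule.orthogonalProjectionOnto_eq_zero_iff]
    rw [Submodule.mem_orthogonal]
    intro y hy
    have hyfix : T.mulVec y = y := by
      have := congrArg WithLp.ofLp (LinearMap.mem_eqLocus.mp hy)
      simpa using this
    have yconst := harmonic_const T hsymm hnonneg hstoch y hyfix
    have hconst : ∀ c : Quotient st, ∀ a ∈ cls c, ∀ b ∈ cls c, y a = y b := by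
      intro c a ha b hb
      have h1 : Quotient.mk st a = Quotient.mk st b := by
        rw [(hmemiff a c).mp ha, (hmemiff b c).mp hb]
      have h2 : st.r a b := Quotient.exact h1
      rw [hst] at h2
      exact yconst a b h2
    have hinner : (inner ℝ y hE : ℝ) = ∑ a, y a * h a := by
      simp [PiLp.inner_apply, RCLike.inner_apply, hE, mul_comm]
    rw [hinner]
    calc ∑ a, y a * h a = ∑ c : Quotient st, ∑ a ∈ cls c, y a * h a :=
          (hsumcls _).symm
      _ = 0 := by
          refine Finset.sum_eq_zero fun c _ => ?_
          have hout : Quotient.out c ∈ cls c := (hmemiff _ c).mpr (Quotient.out_eq c)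
          calc ∑ a ∈ cls c, y a * h a
              = ∑ a ∈ cls c, y (Quotient.out c) * h a :=
                Finset.sum_congr rfl fun a ha => by rw [hconst c a ha _ hout]
            _ = y (Quotient.out c) * ∑ a ∈ cls c, h a := by rw [Finset.mul_sum]
            _ = 0 := by rw [hhsum c, mul_zero]
  have hinner0 : Tendsto
      (fun τ => (inner ℝ hE (birkhoffAverage ℝ (⇑(cesaroCLM T)) _root_.id τ hE) : ℝ))
      atTop (nhds 0) := by
    have := Filter.Tendsto.inner (𝕜 := ℝ) (tendsto_const_nhds (x := hE) (f := atTop)) herg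
    simpa using this
  have hQ : ∀ τ : ℕ, (inner ℝ hE (birkhoffAverage ℝ (⇑(cesaroCLM T)) _root_.id τ hE) : ℝ)
      = (1 / (τ : ℝ)) * ∑ t ∈ Finset.range τ, ∑ m₀, h m₀ * ∑ m, (T ^ t) m m₀ * h m := by
    intro τ
    have hterm : ∀ t : ℕ, (inner ℝ hE ((⇑(cesaroCLM T))^[t] hE) : ℝ)
        = ∑ m₀, h m₀ * ∑ m, (T ^ t) m m₀ * h m := by
      intro t
      have hit : (⇑(cesaroCLM T))^[t] hE = WithLp.toLp 2 ((T ^ t).mulVec h) := by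
        have := congrArg (WithLp.toLp 2) (cesaroCLM_iterate T t hE)
        rw [WithLp.toLp_ofLp] at this
        exact this
      rw [hit]
      have : (inner ℝ hE (WithLp.toLp 2 ((T ^ t).mulVec h) : EuclideanSpace ℝ S) : ℝ)
          = ∑ m₀, h m₀ * ((T ^ t).mulVec h m₀) := by
        simp [PiLp.inner_apply, RCLike.inner_apply, hE, mul_comm]
      rw [this]
      refine Finset.sum_congr rfl fun m₀ _ => ?_
      congr 1
      calc (T ^ t).mulVec h m₀ = ∑ m, (T ^ t) m₀ m * h m := by
            simp [Matrix.mulVec, dotProduct]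
        _ = ∑ m, (T ^ t) m m₀ * h m :=
            Finset.sum_congr rfl fun m _ => by rw [hsymmpow t m₀ m]
    rw [birkhoffAverage, birkhoffSum, real_inner_smul_right, inner_sum, one_div]
    simp only [id_eq]
    exact congrArg (fun z => ((τ : ℝ))⁻¹ * z) (Finset.sum_congr rfl fun t _ => hterm t)
  -- assemble
  refine ⟨?_, ?_, ?_⟩
  · have hfinal : Tendsto (fun τ : ℕ => L + (1 / D) *
        (inner ℝ hE (birkhoffAverage ℝ (⇑(cesaroCLM T)) _root_.id τ hE) : ℝ))
        atTop (nhds L) := by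
      have h2 := hinner0.const_mul (1 / D)
      have h3 := (tendsto_const_nhds (x := L) (f := atTop (α := ℕ))).add h2
      simpa using h3
    refine hfinal.congr' ?_
    filter_upwards [eventually_ge_atTop 1] with τ hτ
    have hτ0 : (τ : ℝ) ≠ 0 := by
      exact_mod_cast Nat.one_le_iff_ne_zero.mp hτ
    rw [hQ τ]
    have hsum : ∑ t ∈ Finset.range τ,
        ((1 / D) * ∑ m₀, f m₀ * ∑ m, (T ^ t) m m₀ * f m - μ ^ 2)
        = (τ : ℝ) * L + (1 / D) * ∑ t ∈ Finset.range τ,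
            ∑ m₀, h m₀ * ∑ m, (T ^ t) m m₀ * h m := by
      calc ∑ t ∈ Finset.range τ,
          ((1 / D) * ∑ m₀, f m₀ * ∑ m, (T ^ t) m m₀ * f m - μ ^ 2)
          = ∑ t ∈ Finset.range τ,
            (L + (1 / D) * (∑ m₀, h m₀ * ∑ m, (T ^ t) m m₀ * h m)) :=
            Finset.sum_congr rfl fun t _ => hident t
        _ = _ := by
            rw [Finset.sum_add_distrib, Finset.sum_const, Finset.card_range,
              nsmul_eq_mul, ← Finset.mul_sum]
    rw [hsum]
    field_simp
  · rw [hL]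
    refine Finset.sum_nonneg fun c _ => ?_
    exact mul_nonneg (div_nonneg (le_of_lt (hcard c)) (le_of_lt hD0)) (sq_nonneg _)
  · intro F
    rw [hL]
    refine Finset.sum_le_sum_of_subset_of_nonneg (Finset.subset_univ F) fun c _ _ => ?_
    exact mul_nonneg (div_nonneg (le_of_lt (hcard c)) (le_of_lt hD0)) (sq_nonneg _)
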